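/- Consider f = x₀²(a₂₂y₂² + a₁₂y₁y₂) + x₀x₁(b₂₂y₂² + b₀₂y₀y₂ + b₁₂y₁y₂) + x₁²(c₁₁y₁² + c₂₂y₂² + c₀₂y₀y₂ + c₁₂y₁y₂). Under the substitution (x₀,x₁,y₀,y₁,y₂) ↦ (t⁻²x₀, t²x₁, t⁻⁵y₀, t⁻¹y₁, t⁶y₂), every monomial of f acquires a strictly positive power of t, hence the limit of the rescaled polynomial as t → 0 is 0. -/

import Mathlib

set_option maxHeartbeats 1000000


/-- Under the 1-PS λ(t) = diag(t⁻²,t²) × diag(t⁻⁵,t⁻¹,t⁶), the rescaled (2,2)-form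
f = x₀²(a₂₂y₂²+a₁₂y₁y₂) + x₀x₁(b₂₂y₂²+b₀₂y₀y₂+b₁₂y₁y₂)
  + x₁²(c₁₁y₁²+c₂₂y₂²+c₀₂y₀y₂+c₁₂y₁y₂) tends to 0 as t → 0. -/
theorem stmt_8 (a22 a12 b22 b02 b12 c11 c22 c02 c12 : ℂ)
    (x0 x1 y0 y1 y2 : ℂ) :
    Filter.Tendsto (fun t : ℂ =>
      (t⁻¹^2 * x0)^2 * (a22 * (t^6 * y2)^2 + a12 * (t⁻¹ * y1) * (t^6 * y2))
      + (t⁻¹^2 * x0) * (t^2 * x1) * (b22 * (t^6 * y2)^2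
          + b02 * (t⁻¹^5 * y0) * (t^6 * y2) + b12 * (t⁻¹ * y1) * (t^6 * y2))
      + (t^2 * x1)^2 * (c11 * (t⁻¹ * y1)^2 + c22 * (t^6 * y2)^2
          + c02 * (t⁻¹^5 * y0) * (t^6 * y2) + c12 * (t⁻¹ * y1) * (t^6 * y2)))
      (nhdsWithin 0 {(0 : ℂ)}ᶜ) (nhds 0) := by
  have h : Filter.Tendsto (fun t : ℂ =>
      t^8 * (x0^2 * (a22 * y2^2)) + t * (x0^2 * (a12 * y1 * y2))
      + t^12 * (x0 * x1 * (b22 * y2^2)) + t * (x0 * x1 * (b02 * y0 * y2))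
      + t^5 * (x0 * x1 * (b12 * y1 * y2))
      + t^2 * (x1^2 * (c11 * y1^2)) + t^16 * (x1^2 * (c22 * y2^2))
      + t^5 * (x1^2 * (c02 * y0 * y2)) + t^9 * (x1^2 * (c12 * y1 * y2)))
      (nhdsWithin 0 {(0 : ℂ)}ᶜ) (nhds 0) := by
    have := (Continuous.tendsto (by fun_prop :
      Continuous (fun t : ℂ =>
      t^8 * (x0^2 * (a22 * y2^2)) + t * (x0^2 * (a12 * y1 * y2))
      + t^12 * (x0 * x1 * (b22 * y2^2)) + t * (x0 * x1 * (b02 * y0 * y2))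
      + t^5 * (x0 * x1 * (b12 * y1 * y2))
      + t^2 * (x1^2 * (c11 * y1^2)) + t^16 * (x1^2 * (c22 * y2^2))
      + t^5 * (x1^2 * (c02 * y0 * y2)) + t^9 * (x1^2 * (c12 * y1 * y2)))) 0)
    simp only [zero_pow, mul_zero, zero_mul, add_zero, zero_add] at this
    norm_num at this
    exact this.mono_left nhdsWithin_le_nhds
  refine h.congr' ?_
  filter_upwards [self_mem_nhdsWithin] with t ht
  have ht : t ≠ 0 := ht
  field_simp
  have h13 : t^13 * t⁻¹^13 = 1 := by rw [← mul_pow, mul_inv_cancel₀ ht, one_pow]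
  ring
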